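/- Let (b_n) be a D-sequence. Then the topology τ_b of uniform convergence on {ξ_n : n ∈ ℕ} is finer than the linear topology λ_b: every sequence converging to 0 in τ_b converges to 0 in λ_b. Concretely: if for every m there is j_m such that dist(l_j/b_n, ℤ) ≤ 1/(4m) for all n and all j ≥ j_m, then for every n there is j_n such that b_n ∣ l_j for all j ≥ j_n. -/

import Mathlib

def IsDSeq (b : ℕ → ℕ) : Prop :=
  b 0 = 1 ∧ (∀ n, b n ∣ b (n + 1)) ∧ ∀ n, b n ≠ b (n + 1)

theorem stmt_15 (b : ℕ → ℕ) (hb : IsDSeq b) (l : ℕ → ℤ)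
    (h : ∀ m : ℕ, 0 < m → ∃ J : ℕ, ∀ j ≥ J, ∀ n : ℕ,
      ∃ z : ℤ, |(l j : ℝ) / b n - z| ≤ 1 / (4 * m)) :
    ∀ n : ℕ, ∃ J : ℕ, ∀ j ≥ J, (b n : ℤ) ∣ l j := by
  obtain ⟨hb0, hdvd, hne⟩ := hb
  intro n
  have hbn : 0 < b n := by
    rcases Nat.eq_zero_or_pos (b n) with h0 | h0
    · exfalso
      have := hdvd n
      rw [h0] at this
      exact hne n (by rw [h0]; exact (Nat.zero_dvd.mp this).symm)
    · exact h0
  obtain ⟨J, hJ⟩ := h (b n) hbn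
  refine ⟨J, fun j hj => ?_⟩
  obtain ⟨z, hz⟩ := hJ j hj n
  have hbR : (0 : ℝ) < (b n : ℝ) := by exact_mod_cast hbn
  have key : |(l j : ℝ) - z * b n| ≤ 1 / 4 := by
    have e : (l j : ℝ) - z * b n = ((l j : ℝ) / b n - z) * b n := by
      field_simp
    rw [e, abs_mul, abs_of_nonneg hbR.le]
    calc |(l j : ℝ) / b n - z| * b n ≤ 1 / (4 * b n) * b n :=
          mul_le_mul_of_nonneg_right hz hbR.le
    _ = 1 / 4 := by field_simp
  have hint : l j - z * b n = 0 := by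
    by_contra hc
    have h1 : (1 : ℤ) ≤ |(l j - z * b n : ℤ)| := Int.one_le_abs (by omega)
    have : (1 : ℝ) ≤ |(l j : ℝ) - z * b n| := by
      have := (@Int.cast_le ℝ _ _ _).mpr h1
      push_cast at this
      linarith [this]
    linarith
  exact ⟨z, by linarith [hint]⟩
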